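/- Let Ȧ = ℂ[t₁^{±1},...,t_m^{±1}], k̇ = Der(Ȧ), and let (M, φ, φ̂, ψ) be a quasi-Poisson module over (Ȧ, k̇). Then for every r = (r₁,...,r_m) ∈ ℤ^m and a ∈ Ȧ: ψ_{t^r a} = φ_{t^r} ψ_a + Σ_{j=1}^m φ_{a·d_j(t^r)} (φ_{t_j^{-1}} ψ_{t_j} − ψ₁), where d_j = t_j d/dt_j so d_j(t^r) = r_j t^r. -/
import Mathlib


/-- `Ȧ = ℂ[t₁^{±1},…,t_m^{±1}]`. -/
abbrev LaurentDot (m : ℕ) : Type := AddMonoidAlgebra ℂ (Fin m →₀ ℤ)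

/-- Monomials `t^r` of `Ȧ`. -/
noncomputable def tm (m : ℕ) (r : Fin m →₀ ℤ) : LaurentDot m :=
  AddMonoidAlgebra.single r 1

/-- The commutative product on `g = Ȧ ⊕ Der(Ȧ)`. -/
noncomputable def qpMul {m : ℕ}
    (x y : LaurentDot m × Derivation ℂ (LaurentDot m) (LaurentDot m)) :
    LaurentDot m × Derivation ℂ (LaurentDot m) (LaurentDot m) :=
  (x.1 * y.1, x.1 • y.2 + y.1 • x.2)

/-- The bracket `{a⊕δ, b⊕σ} = (δ(b) − σ(a)) ⊕ [δ,σ]` on `g = Ȧ ⊕ Der(Ȧ)`. -/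
noncomputable def qpBracket {m : ℕ}
    (x y : LaurentDot m × Derivation ℂ (LaurentDot m) (LaurentDot m)) :
    LaurentDot m × Derivation ℂ (LaurentDot m) (LaurentDot m) :=
  (x.2 y.1 - y.2 x.1, ⁅x.2, y.2⁆)

set_option maxHeartbeats 2000000 in
/-- For a quasi-Poisson module `(M, φ, φ̂, ψ)` over `(Ȧ, Der Ȧ)` with
`Ȧ = ℂ[t₁^{±1},…,t_m^{±1}]`: for every `r ∈ ℤ^m` and `a ∈ Ȧ`,
`ψ_{t^r a} = φ_{t^r} ψ_a + Σ_j φ_{a·d_j(t^r)} (φ_{t_j⁻¹} ψ_{t_j} − ψ₁)`,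
where `d_j(t^r) = r_j t^r`. -/
theorem qp_psi_monomial_mul (m : ℕ)
    (M : Type*) [AddCommGroup M] [Module ℂ M]
    (φ : LaurentDot m →ₐ[ℂ] Module.End ℂ M)
    (ψ : (LaurentDot m × Derivation ℂ (LaurentDot m) (LaurentDot m)) →ₗ[ℂ] Module.End ℂ M)
    (φh : (LaurentDot m × Derivation ℂ (LaurentDot m) (LaurentDot m)) →ₗ[ℂ] Module.End ℂ M)
    (hψ : ∀ x y, ψ (qpBracket x y) = ⁅ψ x, ψ y⁆)
    (h3 : ∀ x y, ⁅φh x, φh y⁆ = φh (qpMul x (y.1, 0)) - φh (qpMul (x.1, 0) y))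
    (h4 : ∀ (a : LaurentDot m) (x), φh (qpMul (a, 0) x) = φ a * φh x)
    (h5 : ∀ x (a : LaurentDot m), ⁅φh x, φ a⁆ = 0)
    (h6 : ∀ x y, ⁅φh x, ψ y⁆ = φh (qpBracket x y) - φ y.1 * ψ x + ψ (qpMul x (y.1, 0)))
    (h7 : ∀ x (a : LaurentDot m), ⁅ψ x, φ a⁆ = φ (x.2 a)) :
    ∀ (r : Fin m →₀ ℤ) (a : LaurentDot m),
      ψ (tm m r * a, 0) =
        φ (tm m r) * ψ (a, 0) +
          ∑ j : Fin m, (r j) •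
            (φ (a * tm m r) *
              (φ (tm m (Finsupp.single j (-1))) * ψ (tm m (Finsupp.single j 1), 0)
                - ψ (1, 0))) := by

  classical
  -- Step 0: basic facts
  have tm_mul : ∀ r s : Fin m →₀ ℤ, tm m r * tm m s = tm m (r + s) := by
    intro r s
    simp [tm, AddMonoidAlgebra.single_mul_single]
  have tm_zero : tm m (0 : Fin m →₀ ℤ) = 1 := by
    rw [tm, AddMonoidAlgebra.one_def]
  have hcomm : ∀ (b c : LaurentDot m), ψ (b, 0) * φ c = φ c * ψ (b, 0) := by
    intro b c
    have h := h7 (b, 0) c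
    have h0 : ((b, (0 : Derivation ℂ (LaurentDot m) (LaurentDot m))).2 c) = 0 := rfl
    rw [h0, map_zero, Ring.lie_def, sub_eq_zero] at h
    exact h
  -- Step 1: the product rule ψ_{ab} = φ_a ψ_b + φ_b ψ_a − φ_{ab} ψ₁
  have prod : ∀ a b : LaurentDot m,
      ψ (a * b, 0) = φ a * ψ (b, 0) + φ b * ψ (a, 0) - φ (a * b) * ψ ((1 : LaurentDot m), 0) := by
    intro a b
    have hbr : qpBracket ((a : LaurentDot m), 0) (b, 0)
        = (0 : LaurentDot m × Derivation ℂ (LaurentDot m) (LaurentDot m)) := by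
      simp [qpBracket]
    have hmulab : qpMul ((a : LaurentDot m), 0) (b, 0)
        = ((a * b : LaurentDot m), 0) := by
      simp [qpMul]
    have hmul1b : qpMul ((1 : LaurentDot m), 0) (b, 0)
        = ((b : LaurentDot m), 0) := by
      simp [qpMul]
    have hab := h6 (a, 0) (b, 0)
    rw [show ((b, (0:Derivation ℂ (LaurentDot m) (LaurentDot m))).1) = b from rfl] at hab
    rw [hbr, map_zero, hmulab] at hab
    have h1b := h6 (1, 0) (b, 0)
    have hbr1 : qpBracket ((1 : LaurentDot m), 0) (b, 0)
        = (0 : LaurentDot m × Derivation ℂ (LaurentDot m) (LaurentDot m)) := by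
      simp [qpBracket]
    rw [show ((b, (0:Derivation ℂ (LaurentDot m) (LaurentDot m))).1) = b from rfl] at h1b
    rw [hbr1, map_zero, hmul1b] at h1b
    have hfa : φh ((a : LaurentDot m), 0) = φ a * φh (1, 0) := by
      have := h4 a ((1 : LaurentDot m), 0)
      have hm : qpMul ((a : LaurentDot m), 0) ((1 : LaurentDot m), 0)
          = ((a : LaurentDot m), 0) := by simp [qpMul]
      rwa [hm] at this
    -- ⁅φ a * E, ψ(b,0)⁆ = φ a * ⁅E, ψ(b,0)⁆ since φ a commutes with ψ(b,0)
    have hlie : ⁅φh ((a : LaurentDot m), 0), ψ (b, 0)⁆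
        = φ a * ⁅φh ((1 : LaurentDot m), 0), ψ (b, 0)⁆ := by
      rw [hfa, Ring.lie_def, Ring.lie_def]
      have : ψ (b, 0) * (φ a * φh (1, 0)) = φ a * (ψ (b, 0) * φh (1, 0)) := by
        rw [← mul_assoc, hcomm b a, mul_assoc]
      rw [this, mul_sub, mul_assoc]
    rw [hlie, h1b] at hab
    -- hab : φ a * (0 - φ b * ψ ((1 : LaurentDot m), 0) + ψ (b,0)) = 0 - φ b * ψ (a,0) + ψ (a*b, 0)
    have := hab
    rw [zero_sub, zero_sub, mul_add, mul_neg] at this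
    have key : ψ (a * b, 0)
        = φ b * ψ (a, 0) + (φ a * ψ (b, 0) - φ a * (φ b * ψ ((1 : LaurentDot m), 0))) := by
      linear_combination (norm := noncomm_ring) -this
    rw [key, ← mul_assoc, ← map_mul]
    noncomm_ring
  -- Step 2: the cocycle g
  set g : (Fin m →₀ ℤ) → Module.End ℂ M :=
    fun r => φ (tm m (-r)) * ψ (tm m r, 0) - ψ ((1 : LaurentDot m), 0) with hg_def
  have hinv : ∀ r : Fin m →₀ ℤ, φ (tm m (-r)) * φ (tm m r) = 1 := by
    intro r
    rw [← map_mul, tm_mul, neg_add_cancel, tm_zero, map_one]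
  have hinv' : ∀ r : Fin m →₀ ℤ, φ (tm m r) * φ (tm m (-r)) = 1 := by
    intro r
    rw [← map_mul, tm_mul, add_neg_cancel, tm_zero, map_one]
  have gadd : ∀ r s : Fin m →₀ ℤ, g (r + s) = g r + g s := by
    intro r s
    have hp := prod (tm m r) (tm m s)
    rw [tm_mul] at hp
    have e1 : φ (tm m (-(r + s))) * φ (tm m r) = φ (tm m (-s)) := by
      rw [← map_mul, tm_mul]
      congr 1
      abel
    have e2 : φ (tm m (-(r + s))) * φ (tm m s) = φ (tm m (-r)) := by
      rw [← map_mul, tm_mul]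
      congr 1
      abel
    have : g (r + s) = φ (tm m (-(r + s))) * ψ (tm m (r + s), 0) - ψ ((1 : LaurentDot m), 0) := rfl
    rw [this, hp, mul_sub, mul_add, ← mul_assoc, ← mul_assoc, ← mul_assoc,
      e1, e2, hinv, one_mul]
    show φ (tm m (-s)) * ψ (tm m s, 0) + φ (tm m (-r)) * ψ (tm m r, 0) - ψ ((1 : LaurentDot m), 0) - ψ ((1 : LaurentDot m), 0)
      = (φ (tm m (-r)) * ψ (tm m r, 0) - ψ ((1 : LaurentDot m), 0)) + (φ (tm m (-s)) * ψ (tm m s, 0) - ψ ((1 : LaurentDot m), 0))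
    abel
  have hgsum : ∀ r : Fin m →₀ ℤ, g r = ∑ j : Fin m, (r j) • g (Finsupp.single j 1) := by
    intro r
    set gh : (Fin m →₀ ℤ) →+ Module.End ℂ M := AddMonoidHom.mk' g gadd with hgh
    have hr : r = ∑ j : Fin m, Finsupp.single j (r j) := by
      ext i
      rw [Finsupp.finset_sum_apply]
      simp [Finsupp.single_apply]
    calc g r = gh r := rfl
      _ = gh (∑ j : Fin m, Finsupp.single j (r j)) := by rw [← hr]
      _ = ∑ j : Fin m, gh (Finsupp.single j (r j)) := map_sum gh _ _
      _ = ∑ j : Fin m, (r j) • g (Finsupp.single j 1) := by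
          refine Finset.sum_congr rfl fun j _ => ?_
          have h1 : Finsupp.single j (r j) = (r j) • Finsupp.single j (1 : ℤ) := by
            rw [Finsupp.smul_single, smul_eq_mul, mul_one]
          rw [h1, map_zsmul]
          rfl
  -- Step 3: assembly
  intro r a
  have hp := prod (tm m r) a
  have hψtr : ψ (tm m r, 0) = φ (tm m r) * (ψ ((1 : LaurentDot m), 0) + g r) := by
    rw [hg_def]
    rw [mul_add, mul_sub, ← mul_assoc, hinv', one_mul]
    abel
  have hφc : φ a * φ (tm m r) = φ (tm m r * a) := by
    rw [← map_mul, mul_comm]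
  have step : φ a * ψ (tm m r, 0) - φ (tm m r * a) * ψ ((1 : LaurentDot m), 0) = φ (a * tm m r) * g r := by
    rw [hψtr, ← mul_assoc, hφc, mul_add, mul_comm a (tm m r)]
    abel
  have hgj : ∀ j : Fin m, g (Finsupp.single j 1)
      = φ (tm m (Finsupp.single j (-1))) * ψ (tm m (Finsupp.single j 1), 0) - ψ (1, 0) := by
    intro j
    have hn : (-(Finsupp.single j (1 : ℤ))) = Finsupp.single j (-1) :=
      (Finsupp.single_neg j 1).symm
    simp only [hg_def, hn]
  calc ψ (tm m r * a, 0)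
      = φ (tm m r) * ψ (a, 0) + (φ a * ψ (tm m r, 0) - φ (tm m r * a) * ψ ((1 : LaurentDot m), 0)) := by
        rw [hp]; abel
    _ = φ (tm m r) * ψ (a, 0) + φ (a * tm m r) * g r := by rw [step]
    _ = _ := by
        rw [hgsum r, Finset.mul_sum]
        congr 1
        refine Finset.sum_congr rfl fun j _ => ?_
        rw [mul_smul_comm, hgj j]
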